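/- Let n, k be positive integers with k ≤ n-1, and let n' be the largest divisor of n(n-k) coprime to k!. Write n' = p_1^{e_1} ⋯ p_r^{e_r} with distinct primes p_i and set d = gcd(k, e_1, …, e_r) (with d = k if n' = 1). Let f(x) = ∑_{j=0}^{k} a_j c_j x^j where c_j = (-1)^{k-j} C(n,j) C(n-j-1,k-j) and each a_j is a nonzero integer with all prime factors ≤ k. Then every irreducible factor of f over ℚ has degree divisible by k/d. -/

import Mathlib

set_option maxHeartbeats 1000000
open Polynomial Finset IsDedekindDomain Multiplicative

theorem choose_fact (p x r : ℕ) (hp : p.Prime) (hrx : r ≤ x) (hrp : r < p) :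
    (x.choose r).factorization p = ∑ i ∈ Finset.range r, (x - i).factorization p := by
  have h1 : x.descFactorial r = r.factorial * x.choose r :=
    Nat.descFactorial_eq_factorial_mul_choose x r
  have h2 : x.descFactorial r = ∏ i ∈ Finset.range r, (x - i) := Nat.descFactorial_eq_prod_range x r
  have h3 : (x.descFactorial r).factorization p = ∑ i ∈ Finset.range r, (x - i).factorization p := by
    rw [h2, Nat.factorization_prod]
    · simp
    · intro i hi
      simp only [Finset.mem_range] at hi
      omega
  have h4 : (r.factorial).factorization p = 0 := by
    apply Nat.factorization_eq_zero_of_not_dvd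
    rw [Nat.Prime.dvd_factorial hp]
    omega
  rw [h1, Nat.factorization_mul (Nat.factorial_ne_zero r) (Nat.choose_pos hrx).ne'] at h3
  simpa [h4] using h3

theorem Wvals (n k p : ℕ) (hp : p.Prime) (hk : 1 ≤ k) (hkn : k + 1 ≤ n) (hpk : k < p)
    (hpd : p ∣ n * (n - k)) :
    ∃ js : ℕ, (js = 0 ∨ js = k) ∧
      ∀ j ≤ k, ((n.choose j) * ((n - j - 1).choose (k - j))).factorization p
        = if j = js then 0 else (n * (n - k)).factorization p := by
  have hpk' := hp.two_le
  have hnotboth : ¬ (p ∣ n ∧ p ∣ (n - k)) := by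
    rintro ⟨h1, h2⟩
    have : p ∣ n - (n - k) := Nat.dvd_sub h1 h2
    have hk' : n - (n - k) = k := by omega
    rw [hk'] at this
    exact absurd (Nat.le_of_dvd hk this) (by omega)
  rcases (Nat.Prime.dvd_mul hp).mp hpd with hpn | hpnk
  · -- case p ∣ n
    have hpnk : ¬ p ∣ (n - k) := fun h => hnotboth ⟨hpn, h⟩
    have hE : (n * (n - k)).factorization p = n.factorization p := by
      rw [Nat.factorization_mul (by omega) (by omega)]
      simp [Nat.factorization_eq_zero_of_not_dvd hpnk]
    refine ⟨0, Or.inl rfl, fun j hj => ?_⟩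
    have hc2 : (((n - j - 1).choose (k - j)) ).factorization p = 0 := by
      rw [choose_fact p _ _ hp (by omega) (by omega)]
      apply Finset.sum_eq_zero
      intro i hi
      simp only [Finset.mem_range] at hi
      apply Nat.factorization_eq_zero_of_not_dvd
      intro hdvd
      have h5 : p ∣ n - (n - j - 1 - i) := Nat.dvd_sub hpn hdvd
      have : n - (n - j - 1 - i) = j + 1 + i := by omega
      rw [this] at h5
      have := Nat.le_of_dvd (by omega) h5
      omega
    by_cases hj0 : j = 0
    · subst hj0
      simpa using hc2
    · have hc1 : (n.choose j).factorization p = n.factorization p := by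
        rw [choose_fact p _ _ hp (by omega) (by omega)]
        rw [Finset.sum_eq_single_of_mem 0 (by simp; omega)]
        · simp
        · intro i hi hine
          simp only [Finset.mem_range] at hi
          apply Nat.factorization_eq_zero_of_not_dvd
          intro hdvd
          have h5 : p ∣ n - (n - i) := Nat.dvd_sub hpn hdvd
          have : n - (n - i) = i := by omega
          rw [this] at h5
          have := Nat.le_of_dvd (by omega) h5
          omega
      rw [Nat.factorization_mul (Nat.choose_pos (by omega)).ne' (Nat.choose_pos (by omega)).ne']
      simp [hj0, hc1, hc2, hE]
  · -- case p ∣ n - k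
    have hpn : ¬ p ∣ n := fun h => hnotboth ⟨h, hpnk⟩
    have hE : (n * (n - k)).factorization p = (n - k).factorization p := by
      rw [Nat.factorization_mul (by omega) (by omega)]
      simp [Nat.factorization_eq_zero_of_not_dvd hpn]
    refine ⟨k, Or.inr rfl, fun j hj => ?_⟩
    have hc1 : (n.choose j).factorization p = 0 := by
      rw [choose_fact p _ _ hp (by omega) (by omega)]
      apply Finset.sum_eq_zero
      intro i hi
      simp only [Finset.mem_range] at hi
      apply Nat.factorization_eq_zero_of_not_dvd
      intro hdvd
      have h5 : p ∣ (n - i) - (n - k) := Nat.dvd_sub hdvd hpnk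
      have : (n - i) - (n - k) = k - i := by omega
      rw [this] at h5
      have := Nat.le_of_dvd (by omega) h5
      omega
    by_cases hjk : j = k
    · subst hjk
      rw [Nat.factorization_mul (Nat.choose_pos (by omega)).ne' (Nat.choose_pos (by omega)).ne']
      simp [hc1]
    · have hc2 : (((n - j - 1).choose (k - j))).factorization p = (n - k).factorization p := by
        rw [choose_fact p _ _ hp (by omega) (by omega)]
        rw [Finset.sum_eq_single_of_mem (k - j - 1) (by simp; omega)]
        · have h6 : n - j - 1 - (k - j - 1) = n - k := by omega
          rw [h6]
        · intro i hi hine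
          simp only [Finset.mem_range] at hi
          apply Nat.factorization_eq_zero_of_not_dvd
          intro hdvd
          have h5 : p ∣ (n - j - 1 - i) - (n - k) := Nat.dvd_sub hdvd hpnk
          have : (n - j - 1 - i) - (n - k) = k - j - 1 - i := by omega
          rw [this] at h5
          have := Nat.le_of_dvd (by omega) h5
          omega
      rw [Nat.factorization_mul (Nat.choose_pos (by omega)).ne' (Nat.choose_pos (by omega)).ne']
      simp [hjk, hc1, hc2, hE]


theorem key_local (n k : ℕ) (hk : 1 ≤ k) (hkn : k + 1 ≤ n)
    (p : ℕ) (hp : p.Prime) (hpk : k < p) (hpd : p ∣ n * (n - k))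
    (a : ℕ → ℤ) (ha0 : ∀ j ≤ k, a j ≠ 0)
    (ha : ∀ j ≤ k, ∀ q : ℕ, q.Prime → (q : ℤ) ∣ a j → q ≤ k)
    (g : ℚ[X]) (hg : Irreducible g)
    (hgf : g ∣ (∑ j ∈ Finset.range (k + 1),
      C ((a j : ℚ) * ((-1 : ℚ) ^ (k - j) * (n.choose j : ℚ) *
        ((n - j - 1).choose (k - j) : ℚ))) * X ^ j)) :
    k ∣ (n * (n - k)).factorization p * g.natDegree := by
  classical
  have hg0 : g ≠ 0 := hg.ne_zero
  haveI : Fact (Irreducible g) := ⟨hg⟩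
  set K := AdjoinRoot g with hK
  haveI : FiniteDimensional ℚ K := PowerBasis.finite (AdjoinRoot.powerBasis hg0)
  haveI : CharZero K := charZero_of_injective_algebraMap (algebraMap ℚ K).injective
  haveI : NumberField K := ⟨⟩
  have hrank : Module.finrank ℚ K = g.natDegree := by
    rw [PowerBasis.finrank (AdjoinRoot.powerBasis hg0)]
    rfl
  set R := NumberField.RingOfIntegers K with hR
  set I : Ideal ℤ := Ideal.span {(p : ℤ)} with hI
  have hpZ : Prime (p : ℤ) := Nat.prime_iff_prime_int.mp hp
  haveI : I.IsMaximal := PrincipalIdealRing.isMaximal_of_irreducible hpZ.irreducible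
  have hI0 : I ≠ ⊥ := by
    simp only [hI, Ne, Ideal.span_singleton_eq_bot]
    exact_mod_cast hp.ne_zero
  have hsum := Ideal.sum_ramification_inertia (R := ℤ) (S := R) ℚ K hI0
  rw [hrank] at hsum
  set E := (n * (n - k)).factorization p with hE
  suffices main : ∀ P ∈ (UniqueFactorizationMonoid.factors
      (Ideal.map (algebraMap ℤ R) I)).toFinset,
      k ∣ E * Ideal.ramificationIdx' I P by
    have heq : E * g.natDegree = ∑ P ∈ (UniqueFactorizationMonoid.factors
        (Ideal.map (algebraMap ℤ R) I)).toFinset,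
        (E * Ideal.ramificationIdx' I P) *
          Ideal.inertiaDeg' I P := by
      rw [← hsum, Finset.mul_sum]
      exact Finset.sum_congr rfl fun P _ => by ring
    rw [heq]
    exact Finset.dvd_sum fun P hP => ((main P hP).mul_right _)
  intro P hP
  have hPmem := Multiset.mem_toFinset.mp hP
  have hPprime : Prime P := UniqueFactorizationMonoid.prime_of_factor P hPmem
  haveI hPp : P.IsPrime := Ideal.isPrime_of_prime hPprime
  have hPb : P ≠ ⊥ := hPprime.ne_zero
  set 𝔭 : HeightOneSpectrum R := ⟨P, hPp, hPb⟩ with h𝔭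
  set v : Valuation K (WithZero (Multiplicative ℤ)) := 𝔭.valuation K with hv
  set e := Ideal.ramificationIdx' I P with he
  have hmapI : Ideal.map (algebraMap ℤ R) I = Ideal.span {((p : ℤ) : R)} := by
    rw [hI, Ideal.map_span, Set.image_singleton]
    norm_num
  have hmapI0 : Ideal.map (algebraMap ℤ R) I ≠ ⊥ :=
    UniqueFactorizationMonoid.ne_zero_of_mem_factors hPmem
  have he0 : e ≠ 0 :=
    Ideal.IsDedekindDomain.ramificationIdx'_ne_zero hmapI0 hPp
      (Ideal.le_of_dvd (UniqueFactorizationMonoid.dvd_of_mem_factors hPmem))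
  have hcount : (Associates.mk P).count (Associates.mk
      (Ideal.span {((p : ℤ) : R)})).factors = e := by
    rw [← hmapI, count_associates_factors_eq hmapI0 hPp hPb,
      ← Ideal.IsDedekindDomain.ramificationIdx'_eq_normalizedFactors_count hmapI0 hPp hPb]
  have hinjRK : Function.Injective (algebraMap R K) := IsFractionRing.injective R K
  have hcast : ∀ z : ℤ, ((z : K)) = algebraMap R K ((z : R)) := by
    intro z
    rw [map_intCast]
  have hintR : ∀ z : ℤ, (z : R) = 0 → z = 0 := by
    intro z hz
    have : ((z : K)) = 0 := by rw [hcast z, hz, map_zero]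
    exact_mod_cast this
  have hpR0 : ((p : ℤ) : R) ≠ 0 := fun h => by
    have := hintR _ h
    exact hpZ.ne_zero this
  have hvp : 𝔭.intValuation ((p : ℤ) : R) = Multiplicative.ofAdd (-(e : ℤ)) := by
    rw [IsDedekindDomain.HeightOneSpectrum.intValuation_apply,
      IsDedekindDomain.HeightOneSpectrum.intValuationDef_if_neg _ hpR0]
    rw [show (Associates.mk 𝔭.asIdeal).count
      (Associates.mk (Ideal.span {((p : ℤ) : R)})).factors = e from hcount]
    rfl
  have hPge : Ideal.map (algebraMap ℤ R) I ≤ P :=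
    Ideal.le_of_dvd (UniqueFactorizationMonoid.dvd_of_mem_factors hPmem)
  have hvcop : ∀ u : ℕ, ¬ p ∣ u → u ≠ 0 → 𝔭.intValuation ((u : ℕ) : R) = 1 := by
    intro u hpu hu0
    have h1 : 𝔭.intValuation (u : R) ≤ 1 :=
      IsDedekindDomain.HeightOneSpectrum.intValuation_le_one 𝔭 _
    have h2 : ¬ 𝔭.intValuation (u : R) < 1 := by
      rw [
        IsDedekindDomain.HeightOneSpectrum.intValuation_lt_one_iff_dvd,
        Ideal.dvd_span_singleton]
      intro hmem
      set Q := Ideal.comap (algebraMap ℤ R) P with hQ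
      haveI hQp : Q.IsPrime := Ideal.IsPrime.comap _
      have hIQ : I ≤ Q := by
        rw [hI, Ideal.span_singleton_le_iff_mem]
        exact hPge (Ideal.mem_map_of_mem _ (Ideal.mem_span_singleton_self _))
      have hQI : Q = I := ((inferInstance : I.IsMaximal).eq_of_le hQp.ne_top hIQ).symm
      have huQ : (u : ℤ) ∈ Q := by
        rw [hQ, Ideal.mem_comap]
        have : algebraMap ℤ R (u : ℤ) = ((u : ℕ) : R) := by push_cast; ring
        rwa [this]
      rw [hQI, hI, Ideal.mem_span_singleton] at huQ
      exact hpu (Int.natCast_dvd_natCast.mp huQ)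
    exact le_antisymm h1 (not_lt.mp h2)
  have hvnat : ∀ u : ℕ, u ≠ 0 →
      𝔭.intValuation ((u : ℕ) : R) = Multiplicative.ofAdd (-((e * u.factorization p) : ℤ)) := by
    intro u hu
    have hdecomp : ((u : ℕ) : R) =
        (((p : ℤ) : R)) ^ (u.factorization p) * (((u / p ^ (u.factorization p) : ℕ)) : R) := by
      push_cast
      rw_mod_cast [Nat.ordProj_mul_ordCompl_eq_self u p]
    rw [hdecomp, map_mul, map_pow,
      hvcop _ (Nat.not_dvd_ordCompl hp hu) (Nat.ordCompl_pos p hu).ne', mul_one, hvp,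
      ← WithZero.coe_pow, ← ofAdd_nsmul]
    congr 1
    push_cast
    ring
  have hvint : ∀ z : ℤ, z ≠ 0 →
      v ((z : K)) = Multiplicative.ofAdd (-((e * z.natAbs.factorization p) : ℤ)) := by
    intro z hz
    rw [hcast z, hv, IsDedekindDomain.HeightOneSpectrum.valuation_of_algebraMap]
    rcases Int.natAbs_eq z with h | h
    · rw [show (z : R) = ((z.natAbs : ℕ) : R) by conv_lhs => rw [h, Int.cast_natCast]]
      exact hvnat _ (Int.natAbs_ne_zero.mpr hz)
    · rw [show (z : R) = -((z.natAbs : ℕ) : R) by conv_lhs => rw [h]; rw [Int.cast_neg, Int.cast_natCast],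
        Valuation.map_neg]
      exact hvnat _ (Int.natAbs_ne_zero.mpr hz)
  -- the root and the vanishing sum
  set α := AdjoinRoot.root g with hα
  set z : ℕ → ℤ := fun j => a j *
    ((-1) ^ (k - j) * (n.choose j : ℤ) * ((n - j - 1).choose (k - j) : ℤ)) with hzdef
  have hchoose1 : ∀ j ≤ k, 0 < n.choose j := fun j hj => Nat.choose_pos (by omega)
  have hchoose2 : ∀ j ≤ k, 0 < (n - j - 1).choose (k - j) :=
    fun j hj => Nat.choose_pos (by omega)
  have hz0 : ∀ j ≤ k, z j ≠ 0 := by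
    intro j hj
    apply mul_ne_zero (ha0 j hj)
    apply mul_ne_zero (mul_ne_zero (pow_ne_zero _ (by norm_num)) _)
    · exact_mod_cast (hchoose2 j hj).ne'
    · exact_mod_cast (hchoose1 j hj).ne'
  have hsum0 : ∑ j ∈ Finset.range (k + 1), ((z j : ℤ) : K) * α ^ j = 0 := by
    obtain ⟨w, hw⟩ := hgf
    have h1 : (Polynomial.aeval α) (∑ j ∈ Finset.range (k + 1),
        C ((a j : ℚ) * ((-1 : ℚ) ^ (k - j) * (n.choose j : ℚ) *
          ((n - j - 1).choose (k - j) : ℚ))) * X ^ j) = 0 := by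
      rw [hw, map_mul]
      have hg0' : (Polynomial.aeval α) g = 0 := by
        rw [hα]; exact AdjoinRoot.aeval_eq (f := g) g ▸ AdjoinRoot.mk_self
      rw [hg0', zero_mul]
    rw [map_sum] at h1
    rw [← h1]
    refine Finset.sum_congr rfl fun j _ => ?_
    rw [map_mul, aeval_C, map_pow, aeval_X]
    congr 1
    rw [show ((a j : ℚ) * ((-1 : ℚ) ^ (k - j) * (n.choose j : ℚ) *
      ((n - j - 1).choose (k - j) : ℚ))) = ((z j : ℤ) : ℚ) by rw [hzdef]; push_cast; ring]
    exact (map_intCast (algebraMap ℚ K) (z j)).symm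
  have hα0 : α ≠ 0 := by
    intro h0
    rw [h0] at hsum0
    rw [Finset.sum_eq_single_of_mem 0 (by simp)] at hsum0
    · simp only [pow_zero, mul_one] at hsum0
      exact hz0 0 (by omega) (by exact_mod_cast hsum0)
    · intro i _ hi0
      rw [zero_pow hi0, mul_zero]
  obtain ⟨tm, htm⟩ : ∃ tm : Multiplicative ℤ,
      (tm : WithZero (Multiplicative ℤ)) = v α :=
    WithZero.ne_zero_iff_exists.mp ((Valuation.ne_zero_iff v).mpr hα0)
  set t : ℤ := Multiplicative.toAdd tm with htdef
  obtain ⟨js, hjs01, hjsW⟩ := Wvals n k p hp hk hkn hpk hpd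
  set W : ℕ → ℕ := fun j => if j = js then 0 else E with hWdef
  have hWz : ∀ j ≤ k, (z j).natAbs.factorization p = W j := by
    intro j hj
    have hnab : (z j).natAbs = (a j).natAbs *
        ((n.choose j) * ((n - j - 1).choose (k - j))) := by
      rw [hzdef]
      simp only [Int.natAbs_mul, Int.natAbs_pow]
      norm_num [Int.natAbs_natCast]
    rw [hnab, Nat.factorization_mul (Int.natAbs_ne_zero.mpr (ha0 j hj))
      (Nat.mul_pos (hchoose1 j hj) (hchoose2 j hj)).ne', Finsupp.add_apply]
    have haz : (a j).natAbs.factorization p = 0 := by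
      apply Nat.factorization_eq_zero_of_not_dvd
      intro hdvd
      have : (p : ℤ) ∣ a j := Int.natCast_dvd.mpr hdvd
      exact absurd (ha j hj p hp this) (by omega)
    rw [haz, hjsW j hj, zero_add, hWdef]
  have hterm : ∀ j ≤ k, v (((z j : ℤ) : K) * α ^ j) =
      Multiplicative.ofAdd ((j : ℤ) * t - (e : ℤ) * (W j : ℤ)) := by
    intro j hj
    rw [map_mul, map_pow, ← htm, hvint _ (hz0 j hj), hWz j hj,
      ← WithZero.coe_pow, ← WithZero.coe_mul, WithZero.coe_inj]
    have : tm ^ j = Multiplicative.ofAdd ((j : ℤ) * t) := by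
      rw [htdef, ← ofAdd_toAdd tm, ← ofAdd_nsmul]
      norm_num
    rw [this, ← ofAdd_add]
    congr 1
    ring
  have key : ∀ j0 ≤ k, (∀ j ≤ k, j ≠ j0 →
      ((j : ℤ) * t - (e : ℤ) * (W j : ℤ)) < ((j0 : ℤ) * t - (e : ℤ) * (W j0 : ℤ))) → False := by
    intro j0 hj0 hmax
    have h0 : v (((z j0 : ℤ) : K) * α ^ j0) ≠ 0 := by
      rw [hterm j0 hj0]; exact WithZero.coe_ne_zero
    have heq := Valuation.map_sum_eq_of_lt v (s := Finset.range (k + 1))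
      (f := fun j => ((z j : ℤ) : K) * α ^ j) (j := j0)
      (Finset.mem_range.mpr (by omega)) ?_
    · rw [hsum0, map_zero] at heq
      exact h0 heq.symm
    · intro i hi
      simp only [Finset.mem_sdiff, Finset.mem_range, Finset.mem_singleton] at hi
      rw [hterm i (by omega), hterm j0 hj0, WithZero.coe_lt_coe, Multiplicative.ofAdd_lt]
      exact hmax i (by omega) hi.2
  have hE1 : 1 ≤ E := by
    rw [hE]
    exact Nat.Prime.factorization_pos_of_dvd hp (Nat.mul_ne_zero (by omega) (by omega)) hpd
  have he1 : 1 ≤ e := Nat.one_le_iff_ne_zero.mpr he0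
  have heE : (1 : ℤ) ≤ (e : ℤ) * (E : ℤ) := by exact_mod_cast Nat.mul_pos he1 hE1
  have hkt : (k : ℤ) * t = (e : ℤ) * E ∨ (k : ℤ) * t = -((e : ℤ) * E) := by
    rcases hjs01 with h0 | hk'
    · left
      subst h0
      by_contra hne
      have hW0 : (W 0 : ℤ) = 0 := by simp [hWdef]
      have hWj : ∀ j, j ≠ 0 → (W j : ℤ) = E := fun j hj => by simp [hWdef, hj]
      rcases le_or_gt t 0 with ht0 | ht0
      · apply key 0 (by omega)
        intro j hjk hj0
        rw [hW0, hWj j hj0]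
        have h1 : (j : ℤ) * t ≤ 0 :=
          mul_nonpos_iff.mpr (Or.inl ⟨by positivity, ht0⟩)
        simp only [Nat.cast_zero, zero_mul, mul_zero, sub_zero]
        linarith
      · rcases lt_or_gt_of_ne hne with hlt | hgt
        · apply key 0 (by omega)
          intro j hjk hj0
          rw [hW0, hWj j hj0]
          have h1 : (j : ℤ) * t ≤ (k : ℤ) * t :=
            mul_le_mul_of_nonneg_right (by exact_mod_cast hjk) ht0.le
          simp only [Nat.cast_zero, zero_mul, mul_zero, sub_zero]
          linarith
        · apply key k le_rfl
          intro j hjk hjne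
          rw [hWj k (by omega)]
          by_cases hj0 : j = 0
          · subst hj0
            rw [hW0]
            simp only [Nat.cast_zero, zero_mul, mul_zero, sub_zero]
            linarith
          · rw [hWj j hj0]
            have h1 : (j : ℤ) * t < (k : ℤ) * t :=
              mul_lt_mul_of_pos_right (by exact_mod_cast (by omega : j < k)) ht0
            linarith
    · right
      by_contra hne
      have hWk : (W k : ℤ) = 0 := by simp [hWdef, hk']
      have hWj : ∀ j, j ≠ k → (W j : ℤ) = E := fun j hj => by simp [hWdef, hk', hj]
      rcases le_or_gt 0 t with ht0 | ht0
      · apply key k le_rfl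
        intro j hjk hjne
        rw [hWk, hWj j hjne]
        have h1 : (j : ℤ) * t ≤ (k : ℤ) * t :=
          mul_le_mul_of_nonneg_right (by exact_mod_cast hjk) ht0
        simp only [mul_zero, sub_zero]
        linarith
      · rcases lt_or_gt_of_ne hne with hlt | hgt
        · apply key 0 (by omega)
          intro j hjk hj0
          rw [hWj 0 (by omega)]
          by_cases hjk' : j = k
          · subst hjk'
            rw [hWk]
            simp only [Nat.cast_zero, zero_mul, mul_zero, sub_zero]
            linarith
          · rw [hWj j hjk']
            have h1 : (j : ℤ) * t < 0 :=
              mul_neg_of_pos_of_neg (by exact_mod_cast (by omega : 0 < j)) ht0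
            simp only [Nat.cast_zero, zero_mul, zero_sub]
            linarith
        · apply key k le_rfl
          intro j hjk hjne
          rw [hWk, hWj j hjne]
          have h1 : (j : ℤ) * t ≤ 0 :=
            mul_nonpos_iff.mpr (Or.inl ⟨by positivity, ht0.le⟩)
          simp only [mul_zero, sub_zero]
          linarith
  have hdvd : (k : ℤ) ∣ ((E * e : ℕ) : ℤ) := by
    rcases hkt with h | h
    · exact ⟨t, by push_cast; linarith⟩
    · exact ⟨-t, by push_cast; linarith⟩
  exact_mod_cast hdvd

open Polynomial in
theorem irreducible_factor_degree_dvd_general (n k : ℕ) (hk : 1 ≤ k) (hkn : k ≤ n - 1)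
    (n' : ℕ) (hn'dvd : n' ∣ n * (n - k)) (hn'cop : Nat.Coprime n' (Nat.factorial k))
    (hn'max : ∀ m : ℕ, m ∣ n * (n - k) → Nat.Coprime m (Nat.factorial k) → m ≤ n')
    (d : ℕ) (hd : d = Nat.gcd k (n'.primeFactors.gcd fun p => n'.factorization p))
    (a : ℕ → ℤ) (ha0 : ∀ j ≤ k, a j ≠ 0)
    (ha : ∀ j ≤ k, ∀ q : ℕ, q.Prime → (q : ℤ) ∣ a j → q ≤ k) :
    ∀ g : ℚ[X], Irreducible g →
      g ∣ (∑ j ∈ Finset.range (k + 1),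
        C ((a j : ℚ) * ((-1 : ℚ) ^ (k - j) * (n.choose j : ℚ) *
          ((n - j - 1).choose (k - j) : ℚ))) * X ^ j) →
      k / d ∣ g.natDegree := by
  intro g hgirr hgdvd
  have hkn' : k + 1 ≤ n := by omega
  have hN0 : n * (n - k) ≠ 0 := Nat.mul_ne_zero (by omega) (by omega)
  have hn'0 : n' ≠ 0 := by
    rintro rfl
    rw [zero_dvd_iff] at hn'dvd
    exact hN0 hn'dvd
  have hpfacts : ∀ q ∈ n'.primeFactors, k ∣ n'.factorization q * g.natDegree := by
    intro q hq
    have hqp : q.Prime := Nat.prime_of_mem_primeFactors hq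
    have hqn' : q ∣ n' := Nat.dvd_of_mem_primeFactors hq
    have hqN : q ∣ n * (n - k) := hqn'.trans hn'dvd
    have hqk : k < q := by
      by_contra hle
      push_neg at hle
      have h1 : q ∣ k.factorial := Nat.dvd_factorial hqp.pos hle
      have h2 : q = 1 := Nat.eq_one_of_dvd_coprimes hn'cop hqn' h1
      exact hqp.one_lt.ne' h2
    have hfac : n'.factorization q = (n * (n - k)).factorization q := by
      apply le_antisymm
      · exact (Nat.factorization_le_iff_dvd hn'0 hN0).mpr hn'dvd q
      · set δ := (n * (n - k)).factorization q - n'.factorization q with hδ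
        set m' := n' * q ^ δ with hm'
        have hm'dvd : m' ∣ n * (n - k) := by
          rw [← Nat.factorization_le_iff_dvd
            (Nat.mul_ne_zero hn'0 (pow_ne_zero _ hqp.pos.ne')) hN0]
          intro r
          rw [Nat.factorization_mul hn'0 (pow_ne_zero _ hqp.pos.ne'),
            Nat.factorization_pow, Finsupp.add_apply, Finsupp.smul_apply]
          by_cases hr : r = q
          · subst hr
            have := (Nat.factorization_le_iff_dvd hn'0 hN0).mpr hn'dvd r
            simp only [hqp.factorization, Finsupp.smul_single, smul_eq_mul, mul_one,
              Finsupp.single_eq_same]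
            omega
          · have h3 : (q.factorization) r = 0 := by
              rw [hqp.factorization, Finsupp.single_apply, if_neg (fun h => hr h.symm)]
            rw [h3, smul_zero, add_zero]
            exact (Nat.factorization_le_iff_dvd hn'0 hN0).mpr hn'dvd r
        have hqcop : Nat.Coprime q (Nat.factorial k) :=
          (Nat.Prime.coprime_iff_not_dvd hqp).mpr
            (fun h => by have := (Nat.Prime.dvd_factorial hqp).mp h; omega)
        have hm'cop : Nat.Coprime m' (Nat.factorial k) :=
          Nat.Coprime.mul hn'cop (Nat.Coprime.pow_left δ hqcop)
        have hle := hn'max m' hm'dvd hm'cop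
        have hq1 : q ^ δ = 1 := by
          by_contra hne
          have hne0 : q ^ δ ≠ 0 := pow_ne_zero _ hqp.pos.ne'
          have h2 : 2 ≤ q ^ δ := by omega
          have h3 : n' * 2 ≤ n' * q ^ δ := Nat.mul_le_mul_left _ h2
          rw [hm'] at hle
          omega
        have hδ0 : δ = 0 := by
          by_contra h
          have h4 : q ≤ q ^ δ := Nat.le_self_pow h q
          have := hqp.two_le
          omega
        omega
    rw [hfac]
    exact key_local n k hk hkn' q hqp hqk hqN a ha0 ha g hgirr hgdvd
  have hdk : d ∣ k := hd ▸ Nat.gcd_dvd_left _ _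
  have hkdm : k ∣ d * g.natDegree := by
    rw [hd, ← Nat.gcd_mul_right]
    apply Nat.dvd_gcd (dvd_mul_right k g.natDegree)
    have heq : (n'.primeFactors.gcd fun p => n'.factorization p) * g.natDegree
        = n'.primeFactors.gcd (fun p => n'.factorization p * g.natDegree) := by
      rw [Finset.gcd_mul_right]
      simp
    rw [heq]
    exact Finset.dvd_gcd fun q hq => hpfacts q hq
  obtain ⟨c, hc⟩ := hdk
  have hd0 : d ≠ 0 := by
    rintro rfl
    omega
  have hkd : k / d = c := by
    rw [hc, Nat.mul_div_cancel_left _ (Nat.pos_of_ne_zero hd0)]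
  rw [hkd]
  obtain ⟨u, hu⟩ := hkdm
  refine ⟨u, ?_⟩
  have h5 : d * g.natDegree = d * (c * u) := by rw [hu, hc]; ring
  exact Nat.eq_of_mul_eq_mul_left (Nat.pos_of_ne_zero hd0) h5
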